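/- Let ρ ≥ 0, ν ≥ 0, ε > 0, 0 < T < ∞, let E : ℝ^d → ℝ be continuously differentiable, and let u ∈ C⁴([0,T]; ℝ^d) satisfy ∫_0^T e^{-t/ε} ( ε²ρ u''(t)·η''(t) + εν u'(t)·η'(t) + ∇E(u(t))·η(t) ) dt = 0 for every smooth η : [0,T] → ℝ^d with η(0) = 0 and η'(0) = 0. Then u satisfies the fourth-order ODE ε²ρ u'''' − 2ερ u''' + (ρ − εν) u'' + ν u' + ∇E(u) = 0 on [0,T], together with the natural final conditions ε²ρ u''(T) = 0 and −ε²ρ u'''(T) + εν u'(T) = 0. -/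

import Mathlib

open scoped RealInnerProductSpace

open Set MeasureTheory intervalIntegral Metric

/-- If `u ∈ C⁴([0,T];ℝ^d)` (derivatives `u1, u2, u3, u4`) satisfies the
vanishing first variation identity
`∫_0^T e^{-t/ε} (ε²ρ u''·η'' + εν u'·η' + ∇E(u)·η) dt = 0`
for all smooth `η` with `η(0) = 0`, `η'(0) = 0`, then `u` solves the fourth-order
Euler–Lagrange ODE `ε²ρ u'''' − 2ερ u''' + (ρ − εν) u'' + ν u' + ∇E(u) = 0` on `[0,T]`,
with the natural final conditions `ε²ρ u''(T) = 0` and `−ε²ρ u'''(T) + εν u'(T) = 0`. -/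
theorem wide_euler_lagrange_equation (d : ℕ) (ρ ν ε T : ℝ)
    (hρ : 0 ≤ ρ) (hν : 0 ≤ ν) (hε : 0 < ε) (hT : 0 < T)
    (E : EuclideanSpace ℝ (Fin d) → ℝ) (hE : ContDiff ℝ 1 E)
    (u u1 u2 u3 u4 : ℝ → EuclideanSpace ℝ (Fin d))
    (hu1 : ∀ t ∈ Set.Icc (0 : ℝ) T, HasDerivWithinAt u (u1 t) (Set.Icc 0 T) t)
    (hu2 : ∀ t ∈ Set.Icc (0 : ℝ) T, HasDerivWithinAt u1 (u2 t) (Set.Icc 0 T) t)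
    (hu3 : ∀ t ∈ Set.Icc (0 : ℝ) T, HasDerivWithinAt u2 (u3 t) (Set.Icc 0 T) t)
    (hu4 : ∀ t ∈ Set.Icc (0 : ℝ) T, HasDerivWithinAt u3 (u4 t) (Set.Icc 0 T) t)
    (hu4c : ContinuousOn u4 (Set.Icc 0 T))
    (hvar : ∀ η : ℝ → EuclideanSpace ℝ (Fin d),
      ContDiff ℝ (⊤ : ℕ∞) η → η 0 = 0 → deriv η 0 = 0 →
      (∫ t in (0 : ℝ)..T, Real.exp (-t / ε) *
          (ε ^ 2 * ρ * ⟪u2 t, iteratedDeriv 2 η t⟫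
            + ε * ν * ⟪u1 t, deriv η t⟫
            + ⟪gradient E (u t), η t⟫)) = 0) :
    (∀ t ∈ Set.Icc (0 : ℝ) T,
        (ε ^ 2 * ρ) • u4 t - (2 * ε * ρ) • u3 t + (ρ - ε * ν) • u2 t + ν • u1 t
          + gradient E (u t) = 0)
      ∧ (ε ^ 2 * ρ) • u2 T = 0
      ∧ (-(ε ^ 2 * ρ)) • u3 T + (ε * ν) • u1 T = 0 := by
  have hIcc : Set.uIcc (0 : ℝ) T = Set.Icc 0 T := Set.uIcc_of_le hT.le
  -- continuity of the data
  have huc : ContinuousOn u (Set.Icc 0 T) := fun t ht => (hu1 t ht).continuousWithinAt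
  have hu1c : ContinuousOn u1 (Set.Icc 0 T) := fun t ht => (hu2 t ht).continuousWithinAt
  have hu2c : ContinuousOn u2 (Set.Icc 0 T) := fun t ht => (hu3 t ht).continuousWithinAt
  have hu3c : ContinuousOn u3 (Set.Icc 0 T) := fun t ht => (hu4 t ht).continuousWithinAt
  have hgradc : Continuous (gradient E) := by
    have h1 : Continuous (fderiv ℝ E) := hE.continuous_fderiv one_ne_zero
    exact (InnerProductSpace.toDual ℝ _).symm.continuous.comp h1
  set L : ℝ → EuclideanSpace ℝ (Fin d) := fun t =>
    (ε ^ 2 * ρ) • u4 t - (2 * ε * ρ) • u3 t + (ρ - ε * ν) • u2 t + ν • u1 t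
      + gradient E (u t) with hLdef
  have hLc : ContinuousOn L (Set.Icc 0 T) := by
    rw [hLdef]
    fun_prop
  have hexpc : Continuous fun t : ℝ => Real.exp (-t / ε) :=
    Real.continuous_exp.comp (continuous_id.neg.div_const ε)
  have hexpd : ∀ t : ℝ, HasDerivAt (fun s : ℝ => Real.exp (-s / ε))
      (Real.exp (-t / ε) * (-(1 / ε))) t := by
    intro t
    have h1 : HasDerivAt (fun s : ℝ => -s / ε) (-(1 / ε)) t := by
      simpa [neg_div] using ((hasDerivAt_id t).neg.div_const ε)
    simpa using h1.exp
  -- Key integration-by-parts identity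
  have keyA : ∀ η : ℝ → EuclideanSpace ℝ (Fin d),
      ContDiff ℝ (⊤ : ℕ∞) η → η 0 = 0 → deriv η 0 = 0 →
      (∫ t in (0 : ℝ)..T, Real.exp (-t / ε) * ⟪L t, η t⟫) =
        -(Real.exp (-T / ε) * (ε ^ 2 * ρ * ⟪u2 T, deriv η T⟫
          - ε ^ 2 * ρ * ⟪u3 T, η T⟫ + ε * ρ * ⟪u2 T, η T⟫ + ε * ν * ⟪u1 T, η T⟫)) := by
    intro η hη hη0 hη0'
    have hηdiff := contDiff_infty_iff_deriv.mp hη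
    have hηd : ∀ t, HasDerivAt η (deriv η t) t := fun t => (hηdiff.1 t).hasDerivAt
    have hη1d : ∀ t, HasDerivAt (deriv η) (deriv (deriv η) t) t := fun t =>
      ((hηdiff.2.differentiable (by simp)) t).hasDerivAt
    have hηc : Continuous η := hη.continuous
    have hη1c : Continuous (deriv η) := hηdiff.2.continuous
    have hη2c : Continuous (deriv (deriv η)) := (contDiff_infty_iff_deriv.mp hηdiff.2).2.continuous
    set I : ℝ → ℝ := fun t => Real.exp (-t / ε) *
      (ε ^ 2 * ρ * ⟪u2 t, deriv (deriv η) t⟫ + ε * ν * ⟪u1 t, deriv η t⟫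
        + ⟪gradient E (u t), η t⟫) with hIdef
    set J : ℝ → ℝ := fun t => Real.exp (-t / ε) * ⟪L t, η t⟫ with hJdef
    set q : ℝ → ℝ := fun t => Real.exp (-t / ε) *
      (ε ^ 2 * ρ * ⟪u2 t, deriv η t⟫ - ε ^ 2 * ρ * ⟪u3 t, η t⟫
        + ε * ρ * ⟪u2 t, η t⟫ + ε * ν * ⟪u1 t, η t⟫) with hqdef
    have hq : ∀ t ∈ Set.Icc (0 : ℝ) T, HasDerivWithinAt q (I t - J t) (Set.Icc 0 T) t := by
      intro t ht
      have A1 := (hu3 t ht).inner ℝ ((hη1d t).hasDerivWithinAt)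
      have A2 := (hu4 t ht).inner ℝ ((hηd t).hasDerivWithinAt)
      have A3 := (hu3 t ht).inner ℝ ((hηd t).hasDerivWithinAt)
      have A4 := (hu2 t ht).inner ℝ ((hηd t).hasDerivWithinAt)
      have hp := (((A1.const_mul (ε ^ 2 * ρ)).sub (A2.const_mul (ε ^ 2 * ρ))).add
        (A3.const_mul (ε * ρ))).add (A4.const_mul (ε * ν))
      have hh := ((hexpd t).hasDerivWithinAt).mul hp
      refine hh.congr_deriv ?_
      symm
      simp only [hIdef, hJdef, hLdef, inner_add_left, inner_sub_left, real_inner_smul_left,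
        Pi.add_apply, Pi.sub_apply]
      field_simp
      ring
    have hIc : ContinuousOn I (Set.Icc 0 T) :=
      hexpc.continuousOn.mul
        (((continuousOn_const.mul (hu2c.inner hη2c.continuousOn)).add
          (continuousOn_const.mul (hu1c.inner hη1c.continuousOn))).add
          ((hgradc.comp_continuousOn huc).inner hηc.continuousOn))
    have hJc : ContinuousOn J (Set.Icc 0 T) :=
      hexpc.continuousOn.mul (hLc.inner hηc.continuousOn)
    have hIint : IntervalIntegrable I volume 0 T :=
      ContinuousOn.intervalIntegrable (by rwa [hIcc])
    have hJint : IntervalIntegrable J volume 0 T :=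
      ContinuousOn.intervalIntegrable (by rwa [hIcc])
    have hftc : (∫ t in (0 : ℝ)..T, (I t - J t)) = q T - q 0 :=
      intervalIntegral.integral_eq_sub_of_hasDeriv_right_of_le hT.le
        (fun t ht => (hq t ht).continuousWithinAt)
        (fun x hx => (((hq x (Set.Ioo_subset_Icc_self hx)).hasDerivAt
          (Icc_mem_nhds hx.1 hx.2)).hasDerivWithinAt))
        (hIint.sub hJint)
    have hq0 : q 0 = 0 := by simp [hqdef, hη0, hη0']
    have hI0 : (∫ t in (0 : ℝ)..T, I t) = 0 := by
      have h2 : iteratedDeriv 2 η = deriv (deriv η) := by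
        rw [iteratedDeriv_succ, iteratedDeriv_one]
      have hv := hvar η hη hη0 hη0'
      rw [h2] at hv
      simpa only [hIdef] using hv
    rw [intervalIntegral.integral_sub hIint hJint, hI0, hq0, sub_zero, zero_sub] at hftc
    have : (∫ t in (0 : ℝ)..T, J t) = -(q T) := by linarith
    simpa only [hJdef, hqdef] using this
  -- Step 2: the Euler–Lagrange equation on the interior
  have hL0 : ∀ t ∈ Set.Ioo (0 : ℝ) T, L t = 0 := by
    intro t₀ ht₀
    by_contra hne
    have hc : (0 : ℝ) < ⟪L t₀, L t₀⟫ := by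
      have h1 : ⟪L t₀, L t₀⟫ ≠ 0 := fun h => hne (inner_self_eq_zero.mp h)
      exact lt_of_le_of_ne real_inner_self_nonneg (Ne.symm h1)
    have hgat : ContinuousAt (fun s => ⟪L s, L t₀⟫) t₀ :=
      ((hLc.inner continuousOn_const) t₀ (Set.Ioo_subset_Icc_self ht₀)).continuousAt
        (Icc_mem_nhds ht₀.1 ht₀.2)
    have hev : ∀ᶠ s in nhds t₀, 0 < ⟪L s, L t₀⟫ := hgat.eventually (eventually_gt_nhds hc)
    obtain ⟨δ₁, hδ₁pos, hδ₁⟩ := Metric.eventually_nhds_iff.mp hev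
    set r : ℝ := min (min t₀ (T - t₀)) δ₁ / 2 with hrdef
    have hr : 0 < r := by
      have h1 : 0 < t₀ := ht₀.1
      have h2 : 0 < T - t₀ := by linarith [ht₀.2]
      positivity
    have hrt₀ : 2 * r ≤ t₀ := by
      have := min_le_left (min t₀ (T - t₀)) δ₁
      have := min_le_left t₀ (T - t₀)
      simp only [hrdef]; linarith
    have hrT : 2 * r ≤ T - t₀ := by
      have := min_le_left (min t₀ (T - t₀)) δ₁
      have := min_le_right t₀ (T - t₀)
      simp only [hrdef]; linarith
    have hrδ : r < δ₁ := by
      have := min_le_right (min t₀ (T - t₀)) δ₁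
      simp only [hrdef]; linarith
    set φ : ContDiffBump t₀ := ⟨r / 2, r, by positivity, by linarith⟩ with hφdef
    set η : ℝ → EuclideanSpace ℝ (Fin d) := fun t => φ t • L t₀ with hηdef
    have hηsm : ContDiff ℝ (⊤ : ℕ∞) η := φ.contDiff.smul contDiff_const
    have hzero0 : η =ᶠ[nhds 0] (fun _ => 0) := by
      refine Metric.eventually_nhds_iff.mpr ⟨r, hr, fun x hx => ?_⟩
      have hd : φ.rOut ≤ dist x t₀ := by
        have h1 : |t₀ - 0| ≤ |t₀ - x| + |x - 0| := abs_sub_le t₀ x 0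
        have h2 : |x - 0| < r := by simpa [Real.dist_eq] using hx
        have h3 : |t₀ - 0| = t₀ := by rw [sub_zero]; exact abs_of_pos ht₀.1
        have h4 : |t₀ - x| = dist x t₀ := by rw [Real.dist_eq, abs_sub_comm]
        show (r : ℝ) ≤ dist x t₀
        rw [h3, h4] at h1
        linarith
      simp [hηdef, φ.zero_of_le_dist hd]
    have hzeroT : η =ᶠ[nhds T] (fun _ => 0) := by
      refine Metric.eventually_nhds_iff.mpr ⟨r, hr, fun x hx => ?_⟩
      have hd : φ.rOut ≤ dist x t₀ := by
        have h1 : |x - T| < r := by simpa [Real.dist_eq] using hx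
        have h2 : |T - t₀| ≤ |T - x| + |x - t₀| := abs_sub_le T x t₀
        have h3 : |T - t₀| = T - t₀ := abs_of_pos (by linarith [ht₀.2])
        have h4 : |T - x| = |x - T| := abs_sub_comm T x
        have h5 : |x - t₀| = dist x t₀ := (Real.dist_eq x t₀).symm
        show (r : ℝ) ≤ dist x t₀
        rw [h3, h4, h5] at h2
        linarith
      simp [hηdef, φ.zero_of_le_dist hd]
    have hη0 : η 0 = 0 := hzero0.eq_of_nhds
    have hη0' : deriv η 0 = 0 := by
      rw [hzero0.deriv_eq]; simp
    have hηT : η T = 0 := hzeroT.eq_of_nhds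
    have hηT' : deriv η T = 0 := by
      rw [hzeroT.deriv_eq]; simp
    have hkey := keyA η hηsm hη0 hη0'
    rw [hηT, hηT'] at hkey
    simp only [inner_zero_right, mul_zero, sub_zero, add_zero, neg_zero] at hkey
    -- the integral of a nonnegative function, positive on a middle interval, is zero
    set f : ℝ → ℝ := fun t => Real.exp (-t / ε) * ⟪L t, η t⟫ with hfdef
    have hfc : ContinuousOn f (Set.Icc 0 T) :=
      hexpc.continuousOn.mul (hLc.inner (hηsm.continuous.continuousOn))
    have hfnonneg : ∀ x, 0 ≤ f x := by
      intro x
      rcases eq_or_ne (φ x) 0 with h | h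
      · simp [hfdef, hηdef, h]
      · have hxball : x ∈ ball t₀ φ.rOut := by
          rw [← φ.support_eq]; exact Function.mem_support.mpr h
        have hxd : dist x t₀ < δ₁ := by
          have : dist x t₀ < r := by simpa [φ] using hxball
          linarith
        have hgx : 0 < ⟪L x, L t₀⟫ := hδ₁ hxd
        have : f x = Real.exp (-x / ε) * (φ x * ⟪L x, L t₀⟫) := by
          simp only [hfdef, hηdef]
          rw [real_inner_smul_right]
        rw [this]
        exact mul_nonneg (Real.exp_pos _).le (mul_nonneg φ.nonneg hgx.le)
    have ha0 : (0 : ℝ) ≤ t₀ - r := by linarith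
    have hbT : t₀ + r ≤ T := by linarith
    have hint1 : IntervalIntegrable f volume 0 (t₀ - r) :=
      ContinuousOn.intervalIntegrable <| (hfc.mono (by
        rw [Set.uIcc_of_le ha0]
        exact Set.Icc_subset_Icc le_rfl (by linarith)))
    have hint2 : IntervalIntegrable f volume (t₀ - r) (t₀ + r) :=
      ContinuousOn.intervalIntegrable <| (hfc.mono (by
        rw [Set.uIcc_of_le (by linarith : t₀ - r ≤ t₀ + r)]
        exact Set.Icc_subset_Icc ha0 hbT))
    have hint3 : IntervalIntegrable f volume (t₀ + r) T :=
      ContinuousOn.intervalIntegrable <| (hfc.mono (by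
        rw [Set.uIcc_of_le hbT]
        exact Set.Icc_subset_Icc (by linarith) le_rfl))
    have hsplit : (∫ t in (0 : ℝ)..(t₀ - r), f t) + (∫ t in (t₀ - r)..(t₀ + r), f t)
        + (∫ t in (t₀ + r)..T, f t) = ∫ t in (0 : ℝ)..T, f t := by
      rw [intervalIntegral.integral_add_adjacent_intervals hint1 hint2,
        intervalIntegral.integral_add_adjacent_intervals (hint1.trans hint2) hint3]
    have hpos : 0 < ∫ t in (t₀ - r)..(t₀ + r), f t := by
      apply intervalIntegral_pos_of_pos_on hint2 _ (by linarith)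
      intro x hx
      have hxball : x ∈ ball t₀ φ.rOut := by
        show dist x t₀ < r
        rw [Real.dist_eq, abs_lt]
        constructor <;> [linarith [hx.1]; linarith [hx.2]]
      have hφpos : 0 < φ x := φ.pos_of_mem_ball hxball
      have hxd : dist x t₀ < δ₁ := by
        have : dist x t₀ < r := hxball
        linarith
      have hgx : 0 < ⟪L x, L t₀⟫ := hδ₁ hxd
      have : f x = Real.exp (-x / ε) * (φ x * ⟪L x, L t₀⟫) := by
        simp only [hfdef, hηdef]
        rw [real_inner_smul_right]
      rw [this]
      exact mul_pos (Real.exp_pos _) (mul_pos hφpos hgx)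
    have hnn1 : 0 ≤ ∫ t in (0 : ℝ)..(t₀ - r), f t :=
      intervalIntegral.integral_nonneg ha0 (fun x _ => hfnonneg x)
    have hnn3 : 0 ≤ ∫ t in (t₀ + r)..T, f t :=
      intervalIntegral.integral_nonneg hbT (fun x _ => hfnonneg x)
    have htot : (∫ t in (0 : ℝ)..T, f t) = 0 := by simpa only [hfdef, hηdef] using hkey
    rw [htot] at hsplit
    linarith
  -- extend to the closed interval by continuity
  have hL0' : ∀ t ∈ Set.Icc (0 : ℝ) T, L t = 0 := by
    intro t ht
    have hclos : t ∈ closure (Set.Ioo (0 : ℝ) T) := by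
      rwa [closure_Ioo hT.ne]
    have hnb : (nhdsWithin t (Set.Ioo (0 : ℝ) T)).NeBot :=
      mem_closure_iff_nhdsWithin_neBot.mp hclos
    have h1 : Filter.Tendsto L (nhdsWithin t (Set.Ioo (0 : ℝ) T)) (nhds (L t)) :=
      ((hLc t ht).mono Set.Ioo_subset_Icc_self).tendsto
    have h2 : Filter.Tendsto L (nhdsWithin t (Set.Ioo (0 : ℝ) T)) (nhds 0) := by
      apply Filter.Tendsto.congr' _ tendsto_const_nhds
      filter_upwards [self_mem_nhdsWithin] with s hs
      exact (hL0 s hs).symm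
    exact tendsto_nhds_unique h1 h2
  -- boundary identity for every admissible test function
  have hG : ∀ η : ℝ → EuclideanSpace ℝ (Fin d),
      ContDiff ℝ (⊤ : ℕ∞) η → η 0 = 0 → deriv η 0 = 0 →
      ε ^ 2 * ρ * ⟪u2 T, deriv η T⟫ - ε ^ 2 * ρ * ⟪u3 T, η T⟫
        + ε * ρ * ⟪u2 T, η T⟫ + ε * ν * ⟪u1 T, η T⟫ = 0 := by
    intro η hη hη0 hη0'
    have hkey := keyA η hη hη0 hη0'
    have hzero : (∫ t in (0 : ℝ)..T, Real.exp (-t / ε) * ⟪L t, η t⟫) = 0 := by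
      rw [intervalIntegral.integral_congr (g := fun _ => (0 : ℝ))]
      · simp
      · intro s hs
        rw [hIcc] at hs
        simp [hL0' s hs]
    rw [hzero] at hkey
    have hexpne : Real.exp (-T / ε) ≠ 0 := (Real.exp_pos _).ne'
    have := hkey.symm
    rw [neg_eq_zero, mul_eq_zero] at this
    exact this.resolve_left hexpne
  -- first boundary condition, with test function t ↦ (t·t·(t-T)) • v
  have hb1 : ∀ v : EuclideanSpace ℝ (Fin d), ρ * ⟪u2 T, v⟫ = 0 := by
    intro v
    set ψ : ℝ → ℝ := fun t => t * t * (t - T) with hψdef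
    have hψd : ∀ t, HasDerivAt ψ ((1 * t + t * 1) * (t - T) + t * t * 1) t := fun t =>
      ((hasDerivAt_id t).mul (hasDerivAt_id t)).mul ((hasDerivAt_id t).sub_const T)
    set η : ℝ → EuclideanSpace ℝ (Fin d) := fun t => ψ t • v with hηdef
    have hηsm : ContDiff ℝ (⊤ : ℕ∞) η :=
      ((contDiff_id.mul contDiff_id).mul (contDiff_id.sub contDiff_const)).smul contDiff_const
    have hηderiv : ∀ t, deriv η t = ((1 * t + t * 1) * (t - T) + t * t * 1) • v := fun t =>
      ((hψd t).smul_const v).deriv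
    have hη0 : η 0 = 0 := by simp [hηdef, hψdef]
    have hη0' : deriv η 0 = 0 := by rw [hηderiv]; simp
    have hg := hG η hηsm hη0 hη0'
    rw [hηderiv] at hg
    have hηT : η T = 0 := by simp [hηdef, hψdef]
    rw [hηT] at hg
    simp only [inner_zero_right, mul_zero, sub_zero, add_zero] at hg
    have hg' : ε ^ 2 * ρ * (((1 * T + T * 1) * (T - T) + T * T * 1) * ⟪u2 T, v⟫) = 0 := by
      rw [← real_inner_smul_right]; exact hg
    have hT2 : ((1 * T + T * 1) * (T - T) + T * T * 1) = T * T := by ring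
    rw [hT2] at hg'
    have hne : ε ^ 2 * (T * T) ≠ 0 := by positivity
    have : ε ^ 2 * (T * T) * (ρ * ⟪u2 T, v⟫) = 0 := by linarith [hg']
    exact (mul_eq_zero.mp this).resolve_left hne
  have hB1 : (ε ^ 2 * ρ) • u2 T = 0 := by
    have h := hb1 ((ε ^ 2 * ρ) • u2 T)
    have h2 : ⟪(ε ^ 2 * ρ) • u2 T, (ε ^ 2 * ρ) • u2 T⟫ = (0 : ℝ) := by
      rw [real_inner_smul_left]
      linear_combination (ε ^ 2) * h
    exact inner_self_eq_zero.mp h2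
  -- second boundary condition, with test function t ↦ (t·t) • v
  have hb2 : ∀ v : EuclideanSpace ℝ (Fin d),
      -(ε ^ 2 * ρ) * ⟪u3 T, v⟫ + ε * ν * ⟪u1 T, v⟫ = 0 := by
    intro v
    set ψ : ℝ → ℝ := fun t => t * t with hψdef
    have hψd : ∀ t, HasDerivAt ψ (1 * t + t * 1) t := fun t =>
      (hasDerivAt_id t).mul (hasDerivAt_id t)
    set η : ℝ → EuclideanSpace ℝ (Fin d) := fun t => ψ t • v with hηdef
    have hηsm : ContDiff ℝ (⊤ : ℕ∞) η := (contDiff_id.mul contDiff_id).smul contDiff_const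
    have hηderiv : ∀ t, deriv η t = (1 * t + t * 1) • v := fun t =>
      ((hψd t).smul_const v).deriv
    have hη0 : η 0 = 0 := by simp [hηdef, hψdef]
    have hη0' : deriv η 0 = 0 := by rw [hηderiv]; simp
    have hg := hG η hηsm hη0 hη0'
    rw [hηderiv] at hg
    have hηT : η T = (T * T) • v := by simp [hηdef, hψdef]
    rw [hηT] at hg
    simp only [real_inner_smul_right] at hg
    have h2 := hb1 v
    have hTne : (T * T : ℝ) ≠ 0 := by positivity
    have hmain : T * T * (-(ε ^ 2 * ρ) * ⟪u3 T, v⟫ + ε * ν * ⟪u1 T, v⟫) = 0 := by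
      linear_combination hg - (2 * T * ε ^ 2 + T * T * ε) * h2
    have := mul_eq_zero.mp hmain
    exact this.resolve_left hTne
  have hB2 : (-(ε ^ 2 * ρ)) • u3 T + (ε * ν) • u1 T = 0 := by
    have h := hb2 ((-(ε ^ 2 * ρ)) • u3 T + (ε * ν) • u1 T)
    rw [← real_inner_smul_left, ← real_inner_smul_left, ← inner_add_left] at h
    exact inner_self_eq_zero.mp h
  exact ⟨fun t ht => hL0' t ht, hB1, hB2⟩
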